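/- Let Σ be a finite dimensional algebra, and let L^•: 0 → L^s → L^{s+1} → ⋯ → L^t → 0 be a bounded complex of finitely generated Σ-modules each lying in Gproj(Σ)^⊥. If a finitely generated Σ-module M is quasi-isomorphic (in the derived category) to L^•, then M ∈ Gproj(Σ)^⊥, i.e. Ext_Σ^p(U, M) = 0 for all Gorenstein projective U and all p ≥ 1. -/

import Mathlib

noncomputable section

open scoped TensorProduct
open MulOpposite

section BTensorCore

variable (B : Type) [Ring B]

/-- The balancing relations for the tensor product over `B` of a right `B`-module `M`
and a left `B`-module `N`. -/
def BTrel (M N : Type) [AddCommGroup M] [AddCommGroup N] [Module Bᵐᵒᵖ M] [Module B N] :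
    Submodule ℤ (TensorProduct ℤ M N) :=
  Submodule.span ℤ {x | ∃ (m : M) (b : B) (n : N),
    x = (op b • m) ⊗ₜ[ℤ] n - m ⊗ₜ[ℤ] (b • n)}

/-- The balanced tensor product `M ⊗_B N` of a right `B`-module `M` and a left `B`-module `N`,
realized as a quotient of the tensor product of abelian groups. -/
def BTensor (M N : Type) [AddCommGroup M] [AddCommGroup N] [Module Bᵐᵒᵖ M] [Module B N] : Type :=
  TensorProduct ℤ M N ⧸ BTrel B M N

instance (M N : Type) [AddCommGroup M] [AddCommGroup N] [Module Bᵐᵒᵖ M] [Module B N] :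
    AddCommGroup (BTensor B M N) :=
  inferInstanceAs (AddCommGroup (TensorProduct ℤ M N ⧸ BTrel B M N))

variable {M N : Type} [AddCommGroup M] [AddCommGroup N] [Module Bᵐᵒᵖ M] [Module B N]

/-- The class of `m ⊗ n` in `M ⊗_B N`. -/
def BTensor.tmul (m : M) (n : N) : BTensor B M N :=
  Submodule.Quotient.mk (m ⊗ₜ[ℤ] n)

/-- Functoriality of `M ⊗_B -` in the second (left-module) variable. -/
def BTensor.map₂ (Mfix : Type) [AddCommGroup Mfix] [Module Bᵐᵒᵖ Mfix]
    {N' : Type} [AddCommGroup N'] [Module B N'] (f : N →ₗ[B] N') :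
    BTensor B Mfix N →ₗ[ℤ] BTensor B Mfix N' :=
  Submodule.mapQ _ _ (TensorProduct.map LinearMap.id f.toAddMonoidHom.toIntLinearMap) (by
    rw [BTrel, Submodule.span_le]
    rintro x ⟨m, b, n, rfl⟩
    simp only [SetLike.mem_coe, Submodule.mem_comap, map_sub, TensorProduct.map_tmul,
      LinearMap.id_coe, id_eq, AddMonoidHom.coe_toIntLinearMap, LinearMap.toAddMonoidHom_coe]
    have key : (TensorProduct.map LinearMap.id f.toAddMonoidHom.toIntLinearMap)
        ((op b • m) ⊗ₜ[ℤ] n - m ⊗ₜ[ℤ] (b • n)) = (op b • m) ⊗ₜ[ℤ] f n - m ⊗ₜ[ℤ] (b • f n) := by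
      simp
    exact (congrArg (· ∈ BTrel B Mfix N') key).mpr (Submodule.subset_span ⟨m, b, f n, rfl⟩))

/-- Functoriality of `- ⊗_B N` in the first (right-module) variable. -/
def BTensor.map₁ (Nfix : Type) [AddCommGroup Nfix] [Module B Nfix]
    {M' : Type} [AddCommGroup M'] [Module Bᵐᵒᵖ M'] (g : M →ₗ[Bᵐᵒᵖ] M') :
    BTensor B M Nfix →ₗ[ℤ] BTensor B M' Nfix :=
  Submodule.mapQ _ _ (TensorProduct.map g.toAddMonoidHom.toIntLinearMap LinearMap.id) (by
    rw [BTrel, Submodule.span_le]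
    rintro x ⟨m, b, n, rfl⟩
    simp only [SetLike.mem_coe, Submodule.mem_comap, map_sub, TensorProduct.map_tmul,
      LinearMap.id_coe, id_eq, AddMonoidHom.coe_toIntLinearMap, LinearMap.toAddMonoidHom_coe]
    have key : (TensorProduct.map g.toAddMonoidHom.toIntLinearMap LinearMap.id)
        ((op b • m) ⊗ₜ[ℤ] n - m ⊗ₜ[ℤ] (b • n)) = (op b • g m) ⊗ₜ[ℤ] n - g m ⊗ₜ[ℤ] (b • n) := by
      simp
    exact (congrArg (· ∈ BTrel B M' Nfix) key).mpr (Submodule.subset_span ⟨g m, b, n, rfl⟩))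

theorem BTensor.map₂_mk (Mfix : Type) [AddCommGroup Mfix] [Module Bᵐᵒᵖ Mfix]
    {N' : Type} [AddCommGroup N'] [Module B N'] (f : N →ₗ[B] N') (y : Mfix ⊗[ℤ] N) :
    BTensor.map₂ B Mfix f (Submodule.Quotient.mk y) =
      Submodule.Quotient.mk
        (TensorProduct.map LinearMap.id f.toAddMonoidHom.toIntLinearMap y) :=
  by rfl

theorem BTensor.map₁_mk (Nfix : Type) [AddCommGroup Nfix] [Module B Nfix]
    {M' : Type} [AddCommGroup M'] [Module Bᵐᵒᵖ M'] (g : M →ₗ[Bᵐᵒᵖ] M') (y : M ⊗[ℤ] Nfix) :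
    BTensor.map₁ B Nfix g (Submodule.Quotient.mk y) =
      Submodule.Quotient.mk
        (TensorProduct.map g.toAddMonoidHom.toIntLinearMap LinearMap.id y) :=
  by rfl

end BTensorCore

section LeftRight

variable (B : Type) [Ring B] (Γ : Type) [Ring Γ]
variable (M N : Type) [AddCommGroup M] [AddCommGroup N] [Module Bᵐᵒᵖ M] [Module B N]

section Left
variable [Module Γ M] [SMulCommClass Γ Bᵐᵒᵖ M]

/-- left scalar multiplication on `M`, as a right-`B`-linear map. -/
def lsmulRightLinear (g : Γ) : M →ₗ[Bᵐᵒᵖ] M where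
  toFun := (g • ·)
  map_add' := smul_add g
  map_smul' := fun b m => by exact smul_comm g b m

instance BTensor.instSMulLeft : SMul Γ (BTensor B M N) :=
  ⟨fun g => BTensor.map₁ B N (lsmulRightLinear B Γ M g)⟩

instance BTensor.leftModule : Module Γ (BTensor B M N) := by
  refine Function.Surjective.module Γ
    (⟨⟨(Submodule.Quotient.mk : TensorProduct ℤ M N → BTensor B M N), rfl⟩, fun x y => rfl⟩)
    (Submodule.Quotient.mk_surjective _) ?_
  intro g y
  show Submodule.Quotient.mk (g • y) = BTensor.map₁ B N (lsmulRightLinear B Γ M g)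
    (Submodule.Quotient.mk y)
  rw [BTensor.map₁_mk]
  congr 1

end Left

section Right
variable [Module Γᵐᵒᵖ N] [SMulCommClass B Γᵐᵒᵖ N]

/-- right scalar multiplication on `N`, as a left-`B`-linear map. -/
def rsmulLeftLinear (g : Γᵐᵒᵖ) : N →ₗ[B] N where
  toFun := (g • ·)
  map_add' := smul_add g
  map_smul' := fun b n => by exact (smul_comm b g n).symm

instance BTensor.instSMulRight : SMul Γᵐᵒᵖ (BTensor B M N) :=
  ⟨fun g => BTensor.map₂ B M (rsmulLeftLinear B Γ N g)⟩

instance BTensor.rightModule : Module Γᵐᵒᵖ (BTensor B M N) := by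
  refine Function.Surjective.module Γᵐᵒᵖ
    (⟨⟨fun (y : N ⊗[ℤ] M) => (Submodule.Quotient.mk (TensorProduct.comm ℤ N M y) :
        BTensor B M N), by simp; rfl⟩, fun x y => by simp; rfl⟩) ?_ ?_
  · intro x
    obtain ⟨y, rfl⟩ := Submodule.Quotient.mk_surjective _ x
    exact ⟨(TensorProduct.comm ℤ N M).symm y, by
      show Submodule.Quotient.mk _ = _
      rw [LinearEquiv.apply_symm_apply]⟩
  · intro g y
    show Submodule.Quotient.mk ((TensorProduct.comm ℤ N M) (g • y)) =
      BTensor.map₂ B M (rsmulLeftLinear B Γ N g)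
        (Submodule.Quotient.mk ((TensorProduct.comm ℤ N M) y))
    rw [BTensor.map₂_mk]
    congr 1
    induction y using TensorProduct.induction_on with
    | zero => simp
    | tmul n m =>
        simp [TensorProduct.smul_tmul', rsmulLeftLinear, TensorProduct.comm_tmul]
    | add x y hx hy => simp [smul_add, hx, hy]

end Right

instance BTensor.smulCommClass [Module Γ M] [SMulCommClass Γ Bᵐᵒᵖ M]
    [Module Γᵐᵒᵖ N] [SMulCommClass B Γᵐᵒᵖ N] :
    SMulCommClass Γ Γᵐᵒᵖ (BTensor B M N) := by
  constructor
  intro g og x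
  obtain ⟨y, rfl⟩ := Submodule.Quotient.mk_surjective _ x
  show (BTensor.map₁ B N (lsmulRightLinear B Γ M g)) ((BTensor.map₂ B M (rsmulLeftLinear B Γ N og)) _)
    = (BTensor.map₂ B M (rsmulLeftLinear B Γ N og)) ((BTensor.map₁ B N (lsmulRightLinear B Γ M g)) _)
  rw [BTensor.map₂_mk, BTensor.map₁_mk, BTensor.map₁_mk, BTensor.map₂_mk]
  congr 1
  induction y using TensorProduct.induction_on with
  | zero => simp
  | tmul m n => simp [lsmulRightLinear, rsmulLeftLinear]
  | add x y hx hy => simp [hx, hy]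

end LeftRight

section Bimod

variable (B : Type) [Ring B]

/-- A `B`-`B`-bimodule, packaged. -/
structure BBimod : Type 1 where
  X : Type
  [addcg : AddCommGroup X]
  [left : Module B X]
  [right : Module Bᵐᵒᵖ X]
  [comm : SMulCommClass B Bᵐᵒᵖ X]

attribute [instance] BBimod.addcg BBimod.left BBimod.right BBimod.comm

variable {B}

/-- tensor product of bimodules over `B`. -/
def BBimod.tensor (M N : BBimod B) : BBimod B where
  X := BTensor B M.X N.X

/-- `M.pow j` is the tensor power `M^{⊗_B (j+1)}`. -/
def BBimod.pow (M : BBimod B) : ℕ → BBimod B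
  | 0 => M
  | (j + 1) => M.tensor (M.pow j)

end Bimod

section Tor

variable (R : Type) [Ring R]

/-- `P`, `d`, `ε` form a projective resolution of the left `R`-module `N`. -/
def IsProjResolution (N : Type) [AddCommGroup N] [Module R N]
    (P : ℕ → ModuleCat R) (d : ∀ i, P (i + 1) ⟶ P i) (ε : P 0 ⟶ ModuleCat.of R N) : Prop :=
  (∀ i, Module.Projective R (P i)) ∧ Function.Surjective ε ∧
    LinearMap.range (d 0).hom = LinearMap.ker ε.hom ∧
    ∀ i, LinearMap.range (d (i + 1)).hom = LinearMap.ker (d i).hom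

/-- `Tor_i^R(M, N) = 0` for all `i ≥ 1`: for every projective resolution `P⬝` of `N`, the
complex `M ⊗_R P⬝` is exact in all positive degrees. -/
def TorVanishesPos (M : Type) [AddCommGroup M] [Module Rᵐᵒᵖ M]
    (N : Type) [AddCommGroup N] [Module R N] : Prop :=
  ∀ (P : ℕ → ModuleCat R) (d : ∀ i, P (i + 1) ⟶ P i) (ε : P 0 ⟶ ModuleCat.of R N),
    IsProjResolution R N P d ε →
    ∀ i, LinearMap.range (BTensor.map₂ R M (d (i + 1)).hom) =
      LinearMap.ker (BTensor.map₂ R M (d i).hom)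

end Tor

section ExtGp

variable (R : Type) [Ring R]

/-- `Ext_R^{i+1}(U, Y) = 0`: for every projective resolution of `U`, the induced complex of
`Hom` groups is exact at the spot computing `Ext^{i+1}`. -/
def ExtVanishSucc (U : Type) [AddCommGroup U] [Module R U]
    (Y : Type) [AddCommGroup Y] [Module R Y] (i : ℕ) : Prop :=
  ∀ (P : ℕ → ModuleCat R) (d : ∀ n, P (n + 1) ⟶ P n) (ε : P 0 ⟶ ModuleCat.of R U),
    IsProjResolution R U P d ε →
    ∀ g : P (i + 1) →ₗ[R] Y, g.comp (d (i + 1)).hom = 0 →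
      ∃ h : P i →ₗ[R] Y, h.comp (d i).hom = g

/-- `U` is a Gorenstein projective `R`-module: it is (isomorphic to) a cycle module of a
complete projective resolution, i.e. an exact complex of projectives which stays exact
under `Hom_R(-, R)`. -/
def IsGorensteinProj (U : Type) [AddCommGroup U] [Module R U] : Prop :=
  ∃ (P : ℤ → ModuleCat.{0} R) (d : ∀ i, P i ⟶ P (i + 1)),
    (∀ i, Module.Projective R (P i)) ∧
    (∀ i, LinearMap.range (d i).hom = LinearMap.ker (d (i + 1)).hom) ∧
    (∀ (i : ℤ) (g : P (i + 1) →ₗ[R] R), g.comp (d i).hom = 0 ↔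
      ∃ h : P (i + 1 + 1) →ₗ[R] R, h.comp (d (i + 1)).hom = g) ∧
    Nonempty (U ≃ₗ[R] LinearMap.ker (d 0).hom)

/-- `Y ∈ Gproj(R)^⊥`: `Ext_R^i(U, Y) = 0` for every finitely generated Gorenstein
projective `U` and every `i ≥ 1`. -/
def MemGprojPerp (Y : Type) [AddCommGroup Y] [Module R Y] : Prop :=
  ∀ (U : Type) [AddCommGroup U] [Module R U], Module.Finite R U → IsGorensteinProj R U →
    ∀ i : ℕ, ExtVanishSucc R U Y i

/-- `X ∈ ^⊥R`: `Ext_R^i(X, R) = 0` for all `i ≥ 1`. -/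
def MemPerpRing (X : Type) [AddCommGroup X] [Module R X] : Prop :=
  ∀ i : ℕ, ExtVanishSucc R X R i

/-- projective dimension at most `n`. -/
def pdLE : ℕ → ModuleCat R → Prop
  | 0, M => Module.Projective R M
  | (n + 1), M => ∃ (P : ModuleCat R) (f : P ⟶ M),
      Module.Projective R P ∧ Function.Surjective f ∧ pdLE n (ModuleCat.of R (LinearMap.ker f.hom))

/-- `M` has finite projective dimension over `R`. -/
def HasFinProjDim (M : Type) [AddCommGroup M] [Module R M] : Prop :=
  ∃ n, pdLE R n (ModuleCat.of R M)

end ExtGp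


/-! ### Auxiliary development for statement13 -/

section Aux1
variable {R : Type} [Ring R]

/-- Factor a map through an injection whose range contains the image. -/
theorem factorThru {A B C : Type} [AddCommGroup A] [AddCommGroup B] [AddCommGroup C]
    [Module R A] [Module R B] [Module R C] (ι : A →ₗ[R] B) (hι : Function.Injective ι)
    (f : C →ₗ[R] B) (hf : ∀ x, f x ∈ LinearMap.range ι) :
    ∃ kk : C →ₗ[R] A, ι.comp kk = f := by
  refine ⟨(LinearEquiv.ofInjective ι hι).symm.toLinearMap.comp
    (f.codRestrict (LinearMap.range ι) hf), ?_⟩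
  ext x
  have h1 : ∀ y : LinearMap.range ι, ι ((LinearEquiv.ofInjective ι hι).symm y) = (y : B) := by
    intro y
    conv_rhs => rw [← (LinearEquiv.ofInjective ι hι).apply_symm_apply y]
    rfl
  simpa using h1 ⟨f x, hf x⟩

variable (R) in
private def resK (N : Type) [AddCommGroup N] [Module R N] : ℕ → ModuleCat.{0} R
  | 0 => ModuleCat.of R N
  | (n+1) => ModuleCat.of R
      (LinearMap.ker (Finsupp.linearCombination R (id : resK N n → resK N n)))

/-- Every module has a free resolution in the sense of `IsProjResolution`. -/
theorem exists_projResolution (N : Type) [AddCommGroup N] [Module R N] :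
    ∃ (P : ℕ → ModuleCat.{0} R) (d : ∀ i, P (i + 1) ⟶ P i) (ε : P 0 ⟶ ModuleCat.of R N),
      IsProjResolution R N P d ε := by
  classical
  let K : ℕ → ModuleCat.{0} R := resK R N
  let P : ℕ → ModuleCat.{0} R := fun n => ModuleCat.of R ((K n) →₀ R)
  let lc : ∀ n, ((K n) →₀ R) →ₗ[R] (K n) := fun n =>
    Finsupp.linearCombination R (id : K n → K n)
  have hK : ∀ n, K (n+1) = ModuleCat.of R (LinearMap.ker (lc n)) := fun n => rfl
  let d : ∀ i, P (i+1) ⟶ P i := fun i =>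
    ModuleCat.ofHom ((LinearMap.ker (lc i)).subtype.comp (lc (i+1)))
  refine ⟨P, d, ModuleCat.ofHom (lc 0), ⟨fun i => inferInstanceAs (Module.Projective R ((K i) →₀ R)), ?_, ?_, ?_⟩⟩
  · exact Finsupp.linearCombination_id_surjective R (K 0)
  · ext x
    constructor
    · rintro ⟨y, rfl⟩
      exact (show ↥(LinearMap.ker (lc 0)) from lc 1 y).2
    · intro hx
      obtain ⟨y, hy⟩ := Finsupp.linearCombination_id_surjective R (K 1)
        (show K 1 from ⟨x, hx⟩)
      exact ⟨y, congrArg Subtype.val hy⟩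
  · intro i
    ext x
    constructor
    · rintro ⟨y, rfl⟩
      have h0 : lc (i+1) (show ↥(LinearMap.ker (lc (i+1))) from lc (i+2) y).1 = 0 :=
        (show ↥(LinearMap.ker (lc (i+1))) from lc (i+2) y).2
      exact LinearMap.mem_ker.mpr (congrArg Subtype.val h0)
    · intro hx
      have hx' : lc (i+1) x = 0 := Subtype.ext (LinearMap.mem_ker.mp hx)
      obtain ⟨y, hy⟩ := Finsupp.linearCombination_id_surjective R (K (i+2))
        (show K (i+2) from ⟨x, hx'⟩)
      exact ⟨y, congrArg Subtype.val hy⟩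

end Aux1

section Aux2
variable {R : Type} [Ring R]

theorem comp_apply_eq {A B C : Type} [AddCommGroup A] [AddCommGroup B] [AddCommGroup C]
    [Module R A] [Module R B] [Module R C] {f : B →ₗ[R] C} {g : A →ₗ[R] B} {h : A →ₗ[R] C}
    (H : f.comp g = h) (x : A) : f (g x) = h x := by
  simpa using LinearMap.congr_fun H x

theorem comp_zero_apply {A B C : Type} [AddCommGroup A] [AddCommGroup B] [AddCommGroup C]
    [Module R A] [Module R B] [Module R C] {f : B →ₗ[R] C} {g : A →ₗ[R] B}
    (H : f.comp g = 0) (x : A) : f (g x) = 0 := by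
  simpa using LinearMap.congr_fun H x

theorem ext_of_comp_inj {A B C : Type} [AddCommGroup A] [AddCommGroup B] [AddCommGroup C]
    [Module R A] [Module R B] [Module R C] {ι : B →ₗ[R] C} (hι : Function.Injective ι)
    {f g : A →ₗ[R] B} (H : ι.comp f = ι.comp g) : f = g := by
  ext x
  exact hι (comp_apply_eq H x ▸ (comp_apply_eq (rfl : ι.comp g = ι.comp g) x))

variable {U : Type} [AddCommGroup U] [Module R U]

/-- Exactness of `Hom(P_•, Y)` at all positive spots, for a fixed resolution. -/
def AllSpots (P : ℕ → ModuleCat.{0} R) (dP : ∀ i, P (i + 1) ⟶ P i)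
    (Y : Type) [AddCommGroup Y] [Module R Y] : Prop :=
  ∀ (m : ℕ) (g : P (m + 1) →ₗ[R] Y), g.comp (dP (m + 1)).hom = 0 →
    ∃ h : P m →ₗ[R] Y, h.comp (dP m).hom = g

variable {P : ℕ → ModuleCat.{0} R} {dP : ∀ i, P (i + 1) ⟶ P i} {ε : P 0 ⟶ ModuleCat.of R U}

theorem allSpots_of_subsingleton {Y : Type} [AddCommGroup Y] [Module R Y] [Subsingleton Y] :
    AllSpots P dP Y := by
  intro m g _
  exact ⟨0, by ext x; exact Subsingleton.elim _ _⟩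

theorem allSpots_congr {Y Y' : Type} [AddCommGroup Y] [Module R Y] [AddCommGroup Y']
    [Module R Y'] (e : Y ≃ₗ[R] Y') (h : AllSpots P dP Y) : AllSpots P dP Y' := by
  intro m g hg
  obtain ⟨h1, hh1⟩ := h m (e.symm.toLinearMap.comp g) (by
    rw [LinearMap.comp_assoc, hg]; ext x; simp)
  refine ⟨e.toLinearMap.comp h1, ?_⟩
  rw [LinearMap.comp_assoc, hh1]
  ext x; simp

/-- complex property of a resolution -/
theorem res_comp_zero (hres : IsProjResolution R U P dP ε) (i : ℕ) :
    (dP i).hom.comp (dP (i + 1)).hom = 0 :=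
  LinearMap.range_le_ker_iff.mp (le_of_eq (hres.2.2.2 i))

theorem res_eps_comp_zero (hres : IsProjResolution R U P dP ε) :
    ε.hom.comp (dP 0).hom = 0 :=
  LinearMap.range_le_ker_iff.mp (le_of_eq (hres.2.2.1))

/-- Quotient closure for `AllSpots`. -/
theorem allSpots_quot (hres : IsProjResolution R U P dP ε)
    {Y₁ Y₂ Y₃ : Type} [AddCommGroup Y₁] [Module R Y₁] [AddCommGroup Y₂] [Module R Y₂]
    [AddCommGroup Y₃] [Module R Y₃]
    (ι : Y₁ →ₗ[R] Y₂) (hι : Function.Injective ι)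
    (π : Y₂ →ₗ[R] Y₃) (hπ : Function.Surjective π)
    (hker : LinearMap.ker π = LinearMap.range ι)
    (hA1 : AllSpots P dP Y₁) (hA2 : AllSpots P dP Y₂) : AllSpots P dP Y₃ := by
  have hπι : π.comp ι = 0 := by
    ext x
    have : ι x ∈ LinearMap.ker π := by rw [hker]; exact ⟨x, rfl⟩
    simpa using this
  intro m g hg
  haveI := hres.1 (m+1)
  obtain ⟨g₁, hg₁⟩ := Module.projective_lifting_property π g hπ
  obtain ⟨a, ha⟩ := factorThru ι hι (g₁.comp (dP (m+1)).hom) (by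
    intro x
    rw [← hker, LinearMap.mem_ker]
    show π (g₁ ((dP (m+1)).hom x)) = 0
    rw [comp_apply_eq hg₁ ((dP (m+1)).hom x)]
    exact comp_zero_apply hg x)
  have hacoc : a.comp (dP (m+2)).hom = 0 := by
    refine ext_of_comp_inj hι ?_
    rw [← LinearMap.comp_assoc, ha, LinearMap.comp_assoc, res_comp_zero hres (m+1),
      LinearMap.comp_zero, LinearMap.comp_zero]
  obtain ⟨b, hb⟩ := hA1 (m+1) a hacoc
  obtain ⟨h₁, hh₁⟩ := hA2 m (g₁ - ι.comp b) (by
    rw [LinearMap.sub_comp, LinearMap.comp_assoc, hb, ha, sub_self])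
  refine ⟨π.comp h₁, ?_⟩
  rw [LinearMap.comp_assoc, hh₁, LinearMap.comp_sub, ← hg₁, ← LinearMap.comp_assoc, hπι,
    LinearMap.zero_comp, sub_zero]

/-- Kernel closure for `AllSpots`, given lifting of maps from `U`. -/
theorem allSpots_ker (hres : IsProjResolution R U P dP ε)
    {Y₁ Y₂ Y₃ : Type} [AddCommGroup Y₁] [Module R Y₁] [AddCommGroup Y₂] [Module R Y₂]
    [AddCommGroup Y₃] [Module R Y₃]
    (ι : Y₁ →ₗ[R] Y₂) (hι : Function.Injective ι)
    (π : Y₂ →ₗ[R] Y₃) (hπ : Function.Surjective π)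
    (hker : LinearMap.ker π = LinearMap.range ι)
    (hA2 : AllSpots P dP Y₂) (hA3 : AllSpots P dP Y₃)
    (hlift : ∀ φ : U →ₗ[R] Y₃, ∃ ψ : U →ₗ[R] Y₂, π.comp ψ = φ) :
    AllSpots P dP Y₁ := by
  have hπι : π.comp ι = 0 := by
    ext x
    have : ι x ∈ LinearMap.ker π := by rw [hker]; exact ⟨x, rfl⟩
    simpa using this
  have hfac : ∀ (W : Type) [AddCommGroup W] [Module R W] (f : W →ₗ[R] Y₂),
      π.comp f = 0 → ∃ kk : W →ₗ[R] Y₁, ι.comp kk = f := by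
    intro W _ _ f hf
    apply factorThru ι hι f
    intro x
    rw [← hker, LinearMap.mem_ker]
    exact comp_zero_apply hf x
  intro m g hg
  obtain ⟨h, hh⟩ := hA2 m (ι.comp g) (by rw [LinearMap.comp_assoc, hg, LinearMap.comp_zero])
  match m with
  | Nat.succ m' =>
    obtain ⟨h', hh'⟩ := hA3 m' (π.comp h) (by
      rw [LinearMap.comp_assoc, hh, ← LinearMap.comp_assoc, hπι, LinearMap.zero_comp])
    haveI := hres.1 m'
    obtain ⟨h'', hh''⟩ := Module.projective_lifting_property π h' hπ
    obtain ⟨kk, hkk⟩ := hfac _ (h - h''.comp (dP m').hom) (by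
      rw [LinearMap.comp_sub, ← hh', ← LinearMap.comp_assoc, hh'', sub_self])
    refine ⟨kk, ext_of_comp_inj hι ?_⟩
    rw [← LinearMap.comp_assoc, hkk, LinearMap.sub_comp, hh, LinearMap.comp_assoc,
      res_comp_zero hres m', LinearMap.comp_zero, sub_zero]
  | 0 =>
    have hkill : LinearMap.ker ε.hom ≤ LinearMap.ker (π.comp h) := by
      rw [← hres.2.2.1]
      rintro x ⟨y, rfl⟩
      show π (h ((dP 0).hom y)) = 0
      rw [comp_apply_eq hh y]
      show π (ι (g y)) = 0
      exact comp_zero_apply hπι (g y)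
    let eqv := LinearMap.quotKerEquivOfSurjective ε.hom hres.2.1
    let φ : U →ₗ[R] Y₃ :=
      ((LinearMap.ker ε.hom).liftQ (π.comp h) hkill).comp eqv.symm.toLinearMap
    have hφ : φ.comp ε.hom = π.comp h := by
      ext x
      show ((LinearMap.ker ε.hom).liftQ (π.comp h) hkill) (eqv.symm (ε x)) = _
      have hsymm : eqv.symm (ε x) = Submodule.Quotient.mk x := by
        rw [LinearEquiv.symm_apply_eq]
        rfl
      rw [hsymm]
      rfl
    obtain ⟨ψ, hψ⟩ := hlift φ
    obtain ⟨kk, hkk⟩ := hfac _ (h - ψ.comp ε.hom) (by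
      rw [LinearMap.comp_sub, ← hφ, ← LinearMap.comp_assoc, hψ, sub_self])
    refine ⟨kk, ext_of_comp_inj hι ?_⟩
    rw [← LinearMap.comp_assoc, hkk, LinearMap.sub_comp, hh, LinearMap.comp_assoc,
      res_eps_comp_zero hres, LinearMap.comp_zero, sub_zero]

end Aux2

section Retract
variable {S : Type} [Ring S]

/-- Over a finite dimensional algebra, `S^{(K)}` is an `S`-linear retract of `S^K`. -/
theorem exists_retraction (k : Type) [Field k] [Algebra k S] [FiniteDimensional k S] (K : Type) :
    ∃ r : (K → S) →ₗ[S] (K →₀ S), ∀ f : K →₀ S, r (fun κ => f κ) = f := by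
  classical
  set n := Module.finrank k S
  set D : Module.Basis (Fin n) k S := Module.finBasis k S with hD
  -- k-linear retraction of (K →₀ k) inside (K → k)
  let incl : (K →₀ k) →ₗ[k] (K → k) :=
    { toFun := fun f κ => f κ
      map_add' := fun f g => by funext κ; simp
      map_smul' := fun c f => by funext κ; simp }
  have hinj : Function.Injective incl := by
    intro f g h
    ext κ
    exact congrFun h κ
  obtain ⟨q, hq⟩ := Submodule.exists_isCompl (LinearMap.range incl)
  let ρ : (K → k) →ₗ[k] (K →₀ k) :=
    (LinearEquiv.ofInjective incl hinj).symm.toLinearMap.comp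
      ((LinearMap.range incl).projectionOnto q hq)
  have hρ : ∀ f : K →₀ k, ρ (incl f) = f := by
    intro f
    show (LinearEquiv.ofInjective incl hinj).symm
      (((LinearMap.range incl).projectionOnto q hq) (incl f)) = f
    rw [show incl f = ((⟨incl f, LinearMap.mem_range_self incl f⟩ : LinearMap.range incl) : K → k) from rfl,
      Submodule.projectionOnto_apply_left hq]
    rw [LinearEquiv.symm_apply_eq]
    rfl
  -- the S-linear retraction
  let rfun : (K → S) → (K →₀ S) := fun F =>
    ∑ b : Fin n, (ρ (fun κ => D.repr (F κ) b)).mapRange (fun a => a • D b) (by simp)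
  have hrfun_eval : ∀ (F : K → S) (κ : K),
      rfun F κ = ∑ b : Fin n, (ρ (fun κ' => D.repr (F κ') b)) κ • D b := by
    intro F κ
    show (∑ b : Fin n, (ρ (fun κ' => D.repr (F κ') b)).mapRange (fun a => a • D b) (by simp)) κ
      = _
    rw [Finset.sum_apply']
    exact Finset.sum_congr rfl (fun b _ => by rw [Finsupp.mapRange_apply])
  have hadd : ∀ F G : K → S, rfun (F + G) = rfun F + rfun G := by
    intro F G
    ext κ
    rw [Finsupp.add_apply, hrfun_eval, hrfun_eval, hrfun_eval, ← Finset.sum_add_distrib]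
    congr 1
    funext b
    have : (fun κ' => D.repr ((F + G) κ') b) =
        (fun κ' => D.repr (F κ') b) + (fun κ' => D.repr (G κ') b) := by
      funext κ'
      simp [Pi.add_apply]
    rw [this, map_add, Finsupp.add_apply, add_smul]
  have hsmul : ∀ (s : S) (F : K → S), rfun (s • F) = s • rfun F := by
    intro s F
    ext κ
    rw [Finsupp.smul_apply, hrfun_eval, hrfun_eval]
    have hexp : ∀ b : Fin n, (fun κ' => D.repr ((s • F) κ') b) =
        ∑ b' : Fin n, (D.repr (s * D b') b) • (fun κ' => D.repr (F κ') b') := by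
      intro b
      funext κ'
      rw [Finset.sum_apply]
      have h1 : (s • F) κ' = s * F κ' := rfl
      have h2 : s * F κ' = ∑ b' : Fin n, D.repr (F κ') b' • (s * D b') := by
        conv_lhs => rw [← D.sum_repr (F κ')]
        rw [Finset.mul_sum]
        congr 1
        funext b'
        rw [Algebra.mul_smul_comm]
      rw [h1, h2, map_sum]
      rw [Finsupp.finset_sum_apply]
      congr 1
      funext b'
      rw [map_smul]
      simp only [Finsupp.smul_apply, Pi.smul_apply, smul_eq_mul]
      ring
    calc ∑ b : Fin n, (ρ (fun κ' => D.repr ((s • F) κ') b)) κ • D b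
        = ∑ b : Fin n, ∑ b' : Fin n,
            ((D.repr (s * D b') b) * (ρ (fun κ' => D.repr (F κ') b')) κ) • D b := by
          congr 1
          funext b
          rw [hexp b, map_sum, Finsupp.finset_sum_apply, Finset.sum_smul]
          congr 1
          funext b'
          rw [map_smul]
          simp only [Finsupp.smul_apply, smul_eq_mul]
      _ = ∑ b' : Fin n, ∑ b : Fin n,
            (ρ (fun κ' => D.repr (F κ') b')) κ • ((D.repr (s * D b') b) • D b) := by
          rw [Finset.sum_comm]
          congr 1; funext b'; congr 1; funext b
          rw [mul_comm, mul_smul]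
      _ = ∑ b' : Fin n, (ρ (fun κ' => D.repr (F κ') b')) κ • (s * D b') := by
          congr 1; funext b'
          rw [← Finset.smul_sum]
          congr 1
          exact D.sum_repr (s * D b')
      _ = s * ∑ b' : Fin n, (ρ (fun κ' => D.repr (F κ') b')) κ • D b' := by
          rw [Finset.mul_sum]
          congr 1; funext b'
          rw [Algebra.mul_smul_comm]
  refine ⟨{ toFun := rfun, map_add' := hadd, map_smul' := hsmul }, ?_⟩
  intro f
  ext κ
  show rfun (fun κ => f κ) κ = f κ
  rw [hrfun_eval]
  have : ∀ b : Fin n, (fun κ' => D.repr (f κ') b) =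
      incl (f.mapRange (fun x => D.repr x b) (by simp)) := by
    intro b
    funext κ'
    show _ = (f.mapRange (fun x => D.repr x b) (by simp)) κ'
    rw [Finsupp.mapRange_apply]
  calc ∑ b : Fin n, (ρ (fun κ' => D.repr (f κ') b)) κ • D b
      = ∑ b : Fin n, D.repr (f κ) b • D b := by
        congr 1; funext b
        rw [this b, hρ]
        rw [Finsupp.mapRange_apply]
    _ = f κ := D.sum_repr (f κ)

/-- Extension of maps into projective targets, from extension of maps into `S`,
along one step of a `Hom(-,S)`-exact pair of composable maps. -/
theorem hom_ext_proj (k : Type) [Field k] [Algebra k S] [FiniteDimensional k S]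
    {W X X' : Type} [AddCommGroup W] [Module S W] [AddCommGroup X]
    [Module S X] [AddCommGroup X'] [Module S X']
    (u : W →ₗ[S] X) (v : X →ₗ[S] X')
    (hypS : ∀ g : X →ₗ[S] S, g.comp u = 0 → ∃ h : X' →ₗ[S] S, h.comp v = g)
    (P : Type) [AddCommGroup P] [Module S P] [Module.Projective S P]
    (G : X →ₗ[S] P) (hG : G.comp u = 0) :
    ∃ H : X' →ₗ[S] P, H.comp v = G := by
  classical
  obtain ⟨sP, hsP⟩ := Module.projective_def.mp ‹Module.Projective S P›
  have hcoc : ∀ p : P, ((Finsupp.lapply p).comp (sP.comp G)).comp u = 0 := by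
    intro p
    rw [LinearMap.comp_assoc, LinearMap.comp_assoc, hG, LinearMap.comp_zero,
      LinearMap.comp_zero]
  choose h hh using fun p : P => hypS ((Finsupp.lapply p).comp (sP.comp G)) (hcoc p)
  obtain ⟨r, hr⟩ := exists_retraction (S := S) k P
  let ν : X' →ₗ[S] (P → S) := LinearMap.pi h
  refine ⟨(Finsupp.linearCombination S (id : P → P)).comp (r.comp ν), ?_⟩
  ext x
  show Finsupp.linearCombination S id (r (ν (v x))) = G x
  have hν : ν (v x) = fun p => (sP (G x)) p := by
    funext p
    show (h p) (v x) = _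
    rw [comp_apply_eq (hh p) x]
    rfl
  rw [hν, hr (sP (G x))]
  exact hsP (G x)

/-- Extension along a `Hom(-,S)`-split injection, into a projective target. -/
theorem ext_along_homext (k : Type) [Field k] [Algebra k S] [FiniteDimensional k S]
    {A F : Type} [AddCommGroup A] [Module S A] [AddCommGroup F]
    [Module S F] (ι : A →ₗ[S] F)
    (hext : ∀ ψ : A →ₗ[S] S, ∃ h : F →ₗ[S] S, h.comp ι = ψ)
    (P : Type) [AddCommGroup P] [Module S P] [Module.Projective S P]
    (G : A →ₗ[S] P) : ∃ H : F →ₗ[S] P, H.comp ι = G := by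
  have := hom_ext_proj k (0 : PUnit.{1} →ₗ[S] A) ι
    (fun g _ => hext g) P G (by ext x; simp)
  exact this

end Retract

section CertAux
variable {S : Type} [Ring S]

private def QcMod (F : Type) [AddCommGroup F] [Module S F]
    (Q : ℤ → ModuleCat.{0} S) : ℤ → ModuleCat.{0} S
  | .ofNat 0 => ModuleCat.of S (F × Q 1)
  | .ofNat 1 => ModuleCat.of S (Q 0 × Q 2)
  | .ofNat (n+2) => Q ((n+3 : ℕ) : ℤ)
  | .negSucc 0 => ModuleCat.of S F
  | .negSucc (n+1) => Q (.negSucc n)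

private def dcMap (F : Type) [AddCommGroup F] [Module S F]
    (Q : ℤ → ModuleCat.{0} S) (e : ∀ i, Q i →ₗ[S] Q (i+1))
    (fm1 : (Q (-1) : Type) →ₗ[S] F)
    (f0 : F →ₗ[S] (F × Q 1))
    (f1 : (F × Q 1) →ₗ[S] (Q 0 × Q 2))
    (f2 : (Q 0 × Q 2) →ₗ[S] Q 3) :
    ∀ i : ℤ, QcMod F Q i →ₗ[S] QcMod F Q (i + 1)
  | .ofNat 0 => f1
  | .ofNat 1 => f2
  | .ofNat (n+2) => e ((n+3 : ℕ) : ℤ)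
  | .negSucc 0 => f0
  | .negSucc 1 => fm1
  | .negSucc (n+2) => e (.negSucc (n+1))

end CertAux

section CertAux2
variable {S : Type} [Ring S]

theorem ext_of_comp_surj {A B C : Type} [AddCommGroup A] [AddCommGroup B] [AddCommGroup C]
    [Module S A] [Module S B] [Module S C] {q : A →ₗ[S] B} (hq : Function.Surjective q)
    {f g : B →ₗ[S] C} (H : f.comp q = g.comp q) : f = g := by
  ext x
  obtain ⟨y, rfl⟩ := hq x
  exact (comp_apply_eq H y).trans (comp_apply_eq (rfl : g.comp q = g.comp q) y).symm

set_option maxHeartbeats 1000000 in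
private theorem certAux
    (Q : ℤ → ModuleCat.{0} S) (e : ∀ i, Q i →ₗ[S] Q (i+1))
    (hproj : ∀ i, Module.Projective S (Q i))
    (hexact : ∀ i, LinearMap.range (e i) = LinearMap.ker (e (i+1)))
    (hdual : ∀ (i : ℤ) (g : Q (i+1) →ₗ[S] S), g.comp (e i) = 0 ↔
      ∃ h : Q (i+1+1) →ₗ[S] S, h.comp (e (i+1)) = g)
    (F : Type) [AddCommGroup F] [Module S F] [Module.Projective S F]
    (ι : ↥(LinearMap.ker (e 0)) →ₗ[S] F) (hι : Function.Injective ι)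
    (hext : ∀ ψ : ↥(LinearMap.ker (e 0)) →ₗ[S] S, ∃ h : F →ₗ[S] S, h.comp ι = ψ)
    (η : Q 0 →ₗ[S] F) (hη : η.comp (LinearMap.ker (e 0)).subtype = ι)
    (φ0 : F →ₗ[S] Q 0) (hφ0 : φ0.comp ι = (LinearMap.ker (e 0)).subtype)
    (B : (Q 1 : Type) →ₗ[S] Q 0) (hB : B.comp (e 0) = LinearMap.id - φ0.comp η) :
    IsGorensteinProj S (F ⧸ LinearMap.range ι) := by
  classical
  -- the corestriction of e (-1) onto N := ker (e 0)
  have hr1 : ∀ x : Q (-1), e (-1) x ∈ LinearMap.ker (e 0) := by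
    intro x
    show e (-1) x ∈ LinearMap.ker (e (-1 + 1))
    rw [← hexact (-1)]
    exact ⟨x, rfl⟩
  set nh : (Q (-1) : Type) →ₗ[S] ↥(LinearMap.ker (e 0)) :=
    (e (-1)).codRestrict (LinearMap.ker (e 0)) hr1 with hnh
  have hsubnh : (LinearMap.ker (e 0)).subtype.comp nh = e (-1) :=
    LinearMap.subtype_comp_codRestrict _ _ _
  have hnhsurj : Function.Surjective nh := by
    intro y
    have hy : (show (Q (-1+1) : Type) from (y : Q 0)) ∈ LinearMap.range (e (-1)) := by
      rw [hexact (-1)]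
      exact y.2
    obtain ⟨x, hx⟩ := hy
    exact ⟨x, Subtype.ext hx⟩
  -- complex basics
  have hee : ∀ i : ℤ, (e (i+1)).comp (e i) = 0 := fun i =>
    LinearMap.range_le_ker_iff.mp (le_of_eq (hexact i))
  have hee_app : ∀ (i : ℤ) (x : Q i), e (i+1) (e i x) = 0 := fun i x => comp_zero_apply (hee i) x
  -- special maps
  set γ₀ : F →ₗ[S] (F × Q 1) :=
    (LinearMap.id - η.comp φ0).prod ((e 0).comp φ0) with hγ₀
  set δ : (F × Q 1 : Type) →ₗ[S] (Q 0 × Q 2 : Type) :=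
    (φ0.comp (LinearMap.fst S F (Q 1)) - B.comp (LinearMap.snd S F (Q 1))).prod
      ((e 1).comp (LinearMap.snd S F (Q 1))) with hδ
  set ε₂ : (Q 0 × Q 2 : Type) →ₗ[S] Q 3 := (e 2).comp (LinearMap.snd S (Q 0) (Q 2)) with hε₂
  set fm1 : (Q (-1) : Type) →ₗ[S] F := ι.comp nh with hfm1
  -- pointwise formulas
  have hγ₀app : ∀ f : F, γ₀ f = (f - η (φ0 f), e 0 (φ0 f)) := fun f => rfl
  have hδapp : ∀ (f : F) (y : Q 1), δ (f, y) = (φ0 f - B y, e 1 y) := fun f y => rfl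
  have hε₂app : ∀ (z : Q 0) (w : Q 2), ε₂ (z, w) = e 2 w := fun z w => rfl
  -- identities
  have hBe : ∀ x : Q 0, B (e 0 x) = x - φ0 (η x) := by
    intro x
    have := comp_apply_eq hB x
    simpa using this
  have hφ0ι : ∀ y : ↥(LinearMap.ker (e 0)), φ0 (ι y) = (y : Q 0) := fun y => comp_apply_eq hφ0 y
  have hηball : ∀ y : ↥(LinearMap.ker (e 0)), η ((y : Q 0)) = ι y := fun y => comp_apply_eq hη y
  -- kernel of γ₀ is range ι
  have hkerγ₀ : LinearMap.ker γ₀ = LinearMap.range ι := by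
    apply le_antisymm
    · intro f hf
      rw [LinearMap.mem_ker] at hf
      rw [hγ₀app] at hf
      have h1 : f = η (φ0 f) := by
        have := congrArg Prod.fst hf
        simpa [sub_eq_zero] using this
      have h2 : e 0 (φ0 f) = 0 := by
        have := congrArg Prod.snd hf
        simpa using this
      refine ⟨⟨φ0 f, h2⟩, ?_⟩
      rw [← hηball ⟨φ0 f, h2⟩]
      exact h1.symm
    · rintro f ⟨y, rfl⟩
      rw [LinearMap.mem_ker, hγ₀app, hφ0ι]
      have h3 : e 0 ((y : Q 0)) = 0 := y.2
      rw [hηball, h3]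
      simp
  -- range γ₀ = ker δ
  have hrangeγ₀ : LinearMap.range γ₀ = LinearMap.ker δ := by
    apply le_antisymm
    · rintro z ⟨f, rfl⟩
      rw [LinearMap.mem_ker, hγ₀app, hδapp]
      have h1 : φ0 (f - η (φ0 f)) - B (e 0 (φ0 f)) = 0 := by
        rw [map_sub, hBe]
        abel
      have h2 : e 1 (e 0 (φ0 f)) = 0 := hee_app 0 _
      rw [h1, h2]
      rfl
    · rintro ⟨f, y⟩ hz
      rw [LinearMap.mem_ker, hδapp] at hz
      have h1 : φ0 f - B y = 0 := by
        have := congrArg Prod.fst hz; simpa using this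
      have h2 : e 1 y = 0 := by
        have := congrArg Prod.snd hz; simpa using this
      have hy : y ∈ LinearMap.range (e 0) := by
        rw [hexact 0]; exact h2
      obtain ⟨x, rfl⟩ := hy
      refine ⟨f + η x, ?_⟩
      rw [hγ₀app]
      have hφf : φ0 f = B (e 0 x) := by rwa [sub_eq_zero] at h1
      have hφ' : φ0 (f + η x) = x := by
        rw [map_add, hφf, hBe]
        abel
      rw [hφ']
      have h5 : f + η x - η x = f := by abel
      rw [h5]
  -- range δ = ker ε₂
  have hrangeδ : LinearMap.range δ = LinearMap.ker ε₂ := by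
    apply le_antisymm
    · rintro z ⟨⟨f, y⟩, rfl⟩
      rw [LinearMap.mem_ker, hδapp, hε₂app]
      exact hee_app 1 y
    · rintro ⟨z, w⟩ hz
      rw [LinearMap.mem_ker, hε₂app] at hz
      have hw : w ∈ LinearMap.range (e 1) := by rw [hexact 1]; exact hz
      obtain ⟨y₀, rfl⟩ := hw
      have hy1 : (show (Q 1 : Type) from e 0 (z + B y₀)) = e 0 (z + B y₀) := rfl
      refine ⟨(η (z + B y₀), (y₀ - (show (Q 1 : Type) from e 0 (z + B y₀)))), ?_⟩
      rw [hδapp]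
      have h1 : φ0 (η (z + B y₀)) - B ((y₀ - (show (Q 1 : Type) from e 0 (z + B y₀)))) = z := by
        rw [map_sub, hBe]
        abel
      have h2' : e 1 ((show (Q 1 : Type) from e 0 (z + B y₀))) = 0 := hee_app 0 _
      have h2 : e 1 ((y₀ - (show (Q 1 : Type) from e 0 (z + B y₀)))) = e 1 y₀ := by
        rw [map_sub, h2', sub_zero]
      rw [h1, h2]
  -- range and kernel of fm1
  have hrangefm1 : LinearMap.range fm1 = LinearMap.range ι := by
    rw [hfm1, LinearMap.range_comp, LinearMap.range_eq_top.mpr hnhsurj, Submodule.map_top]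
  have hkerfm1 : LinearMap.ker fm1 = LinearMap.ker (e (-1)) := by
    rw [hfm1, LinearMap.ker_comp, LinearMap.ker_eq_bot.mpr hι, Submodule.comap_bot,
      hnh, LinearMap.ker_codRestrict]
  -- decomposition of maps on products
  have hprodF : ∀ {Z : Type} [inst : AddCommGroup Z] [inst2 : Module S Z]
      (g : (F × Q 1 : Type) →ₗ[S] Z) (a : F) (b : Q 1),
      g (a, b) = g.comp (LinearMap.inl S F (Q 1)) a + g.comp (LinearMap.inr S F (Q 1)) b := by
    intro Z _ _ g a b
    have : ((a, b) : F × Q 1) = (a, 0) + (0, b) := by simp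
    rw [this, map_add]
    rfl
  have hprodQ : ∀ {Z : Type} [inst : AddCommGroup Z] [inst2 : Module S Z]
      (g : (Q 0 × Q 2 : Type) →ₗ[S] Z) (a : Q 0) (b : Q 2),
      g (a, b) = g.comp (LinearMap.inl S (Q 0) (Q 2)) a + g.comp (LinearMap.inr S (Q 0) (Q 2)) b := by
    intro Z _ _ g a b
    have : ((a, b) : Q 0 × Q 2) = (a, 0) + (0, b) := by simp
    rw [this, map_add]
    rfl
  have hexc : ∀ i : ℤ, LinearMap.range (dcMap F Q e fm1 γ₀ δ ε₂ i)
      = LinearMap.ker (dcMap F Q e fm1 γ₀ δ ε₂ (i+1)) := by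
    rintro (n | n)
    · match n with
      | 0 => exact hrangeδ
      | 1 =>
        show LinearMap.range ε₂ = LinearMap.ker (e ((3:ℕ) : ℤ))
        rw [hε₂, LinearMap.range_comp, LinearMap.range_eq_top.mpr LinearMap.snd_surjective,
          Submodule.map_top]
        exact hexact 2
      | (n+2) =>
        show LinearMap.range (e ((n+3 : ℕ) : ℤ)) = LinearMap.ker (e ((n+4 : ℕ) : ℤ))
        exact hexact _
    · match n with
      | 0 => exact hrangeγ₀
      | 1 =>
        show LinearMap.range fm1 = LinearMap.ker γ₀
        rw [hrangefm1, hkerγ₀]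
      | 2 =>
        show LinearMap.range (e (Int.negSucc 1)) = LinearMap.ker fm1
        rw [hkerfm1]
        exact hexact (-2)
      | (n+3) =>
        show LinearMap.range (e (Int.negSucc (n+2))) = LinearMap.ker (e (Int.negSucc (n+1)))
        exact hexact _
  refine ⟨QcMod F Q, fun i => ModuleCat.ofHom (dcMap F Q e fm1 γ₀ δ ε₂ i), ?_, hexc, ?_, ?_⟩
  · -- projectivity
    rintro (n | n)
    · match n with
      | 0 => exact inferInstanceAs (Module.Projective S (F × Q 1))
      | 1 => exact inferInstanceAs (Module.Projective S ((Q 0 : Type) × Q 2))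
      | (n+2) => exact hproj _
    · match n with
      | 0 => exact ‹Module.Projective S F›
      | (n+1) => exact hproj _
  · -- duality
    intro i
    have hcz : ∀ j : ℤ, ((dcMap F Q e fm1 γ₀ δ ε₂ (j+1)).comp (dcMap F Q e fm1 γ₀ δ ε₂ j)) = 0 :=
      fun j => LinearMap.range_le_ker_iff.mp (le_of_eq (hexc j))
    have hrev : ∀ (g : (QcMod F Q (i+1) : Type) →ₗ[S] S),
        (∃ h : (QcMod F Q (i+1+1) : Type) →ₗ[S] S,
          h.comp (dcMap F Q e fm1 γ₀ δ ε₂ (i+1)) = g) →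
        g.comp (dcMap F Q e fm1 γ₀ δ ε₂ i) = 0 := by
      rintro g ⟨h, hh⟩
      rw [← hh, LinearMap.comp_assoc, hcz i, LinearMap.comp_zero]
    -- the five nontrivial forward statements, with clean types
    have keyQ0 : ∀ g : (Q 0 × Q 2 : Type) →ₗ[S] S, g.comp δ = 0 →
        ∃ h : (Q 3 : Type) →ₗ[S] S, h.comp ε₂ = g := by
      intro g hg
      have hker2im : ∀ z : (Q 0 × Q 2 : Type), ε₂ z = 0 → g z = 0 := by
        intro z hz
        have hmem : z ∈ LinearMap.range δ := by rw [hrangeδ]; exact hz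
        obtain ⟨x, rfl⟩ := hmem
        exact comp_zero_apply hg x
      have hg2e : (g.comp (LinearMap.inr S (Q 0) (Q 2))).comp (e 1) = 0 := by
        apply LinearMap.ext; intro y
        show g ((0 : Q 0), e 1 y) = 0
        exact hker2im _ (by show e 2 (e 1 y) = 0; exact hee_app 1 y)
      obtain ⟨h, hh⟩ := (hdual 1 (g.comp (LinearMap.inr S (Q 0) (Q 2)))).mp hg2e
      refine ⟨h, ?_⟩
      apply LinearMap.ext; rintro ⟨a, b⟩
      show h (e 2 b) = g (a, b)
      have hfst : g ((a : Q 0), (0 : Q 2)) = 0 := by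
        refine hker2im _ ?_
        show e 2 (0 : Q 2) = 0
        simp
      have hab : ((a, b) : (Q 0 × Q 2 : Type)) = (a, 0) + (0, b) := by
        rw [Prod.mk_add_mk, add_zero, zero_add]
      rw [hab, map_add, hfst, zero_add]
      exact comp_apply_eq hh b
    have keyQ1 : ∀ g : (Q 3 : Type) →ₗ[S] S, g.comp ε₂ = 0 →
        ∃ h : (Q 4 : Type) →ₗ[S] S, h.comp (e 3) = g := by
      intro g hg
      have hge : g.comp (e 2) = 0 := by
        apply LinearMap.ext; intro w
        show g (e 2 w) = 0
        have h0 : g (ε₂ ((0 : Q 0), w)) = 0 := comp_zero_apply hg ((0 : Q 0), w)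
        rw [hε₂app] at h0
        exact h0
      exact (hdual 2 g).mp hge
    have keyN0 : ∀ g : (F × Q 1 : Type) →ₗ[S] S, g.comp γ₀ = 0 →
        ∃ h : (Q 0 × Q 2 : Type) →ₗ[S] S, h.comp δ = g := by
      intro g hg
      have hrel : ∀ f : F, g (f - η (φ0 f), e 0 (φ0 f)) = 0 := by
        intro f
        have h0 : g (γ₀ f) = 0 := comp_zero_apply hg f
        rwa [hγ₀app] at h0
      set g₁ : F →ₗ[S] S := g.comp (LinearMap.inl S F (Q 1)) with hg₁def
      set g₂ : (Q 1 : Type) →ₗ[S] S := g.comp (LinearMap.inr S F (Q 1)) with hg₂def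
      have hsplitF : ∀ (a : F) (b : Q 1), g (a, b) = g₁ a + g₂ b := by
        intro a b
        rw [hg₁def, hg₂def]
        exact hprodF g a b
      set h₁ : (Q 0 : Type) →ₗ[S] S := g₁.comp η - g₂.comp (e 0) with hh₁def
      have hh₁app : ∀ x : Q 0, h₁ x = g₁ (η x) - g₂ (e 0 x) := fun x => rfl
      have hh₁φ0 : ∀ f : F, h₁ (φ0 f) = g₁ f := by
        intro f
        have h2 : g₁ f - g₁ (η (φ0 f)) + g₂ (e 0 (φ0 f)) = 0 := by
          have h3 := hrel f
          rw [hsplitF, map_sub] at h3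
          exact h3
        rw [hh₁app]
        refine eq_of_sub_eq_zero ?_
        rw [show g₁ (η (φ0 f)) - g₂ (e 0 (φ0 f)) - g₁ f
          = -(g₁ f - g₁ (η (φ0 f)) + g₂ (e 0 (φ0 f))) from by abel, h2, neg_zero]
      set gB : (Q 1 : Type) →ₗ[S] S := g₂ + h₁.comp B with hgBdef
      have hgBapp : ∀ y : Q 1, gB y = g₂ y + h₁ (B y) := fun y => rfl
      have hgBe : gB.comp (e 0) = 0 := by
        apply LinearMap.ext; intro x
        show gB (e 0 x) = 0
        rw [hgBapp, hBe, map_sub, hh₁φ0, hh₁app]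
        abel
      obtain ⟨h₂, hh₂⟩ := (hdual 0 gB).mp hgBe
      refine ⟨h₁.comp (LinearMap.fst S (Q 0) (Q 2)) + h₂.comp (LinearMap.snd S (Q 0) (Q 2)), ?_⟩
      apply LinearMap.ext; rintro ⟨f, y⟩
      show h₁ (φ0 f - B y) + h₂ (e 1 y) = g (f, y)
      have hA : h₂ (e 1 y) = gB y := comp_apply_eq hh₂ y
      rw [map_sub, hh₁φ0, hA, hgBapp, hsplitF]
      abel
    have keyN1 : ∀ g : F →ₗ[S] S, g.comp fm1 = 0 →
        ∃ h : (F × Q 1 : Type) →ₗ[S] S, h.comp γ₀ = g := by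
      intro g hg
      have hgι : ∀ y, g (ι y) = 0 := by
        intro y
        obtain ⟨x, rfl⟩ := hnhsurj y
        exact comp_zero_apply hg x
      have hgη : (g.comp η).comp (e (-1)) = 0 := by
        apply LinearMap.ext; intro x
        show g (η (e (-1) x)) = 0
        have h1 : e (-1) x = ((nh x : Q 0)) := (comp_apply_eq hsubnh x).symm
        rw [h1, hηball]
        exact hgι _
      obtain ⟨h₂, hh₂⟩ := (hdual (-1) (g.comp η)).mp hgη
      refine ⟨g.comp (LinearMap.fst S F (Q 1)) + h₂.comp (LinearMap.snd S F (Q 1)), ?_⟩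
      apply LinearMap.ext; intro f
      show g (f - η (φ0 f)) + h₂ (e 0 (φ0 f)) = g f
      have hA : h₂ (e 0 (φ0 f)) = g (η (φ0 f)) := comp_apply_eq hh₂ (φ0 f)
      rw [map_sub, hA]
      abel
    have keyN2 : ∀ g : (Q (-1) : Type) →ₗ[S] S, g.comp (e (-2)) = 0 →
        ∃ h : F →ₗ[S] S, h.comp fm1 = g := by
      intro g hg
      obtain ⟨h₀, hh₀⟩ := (hdual (-2) (show (Q (-2 + 1) : Type) →ₗ[S] S from g)).mp hg
      obtain ⟨h, hh⟩ := hext (h₀.comp (LinearMap.ker (e 0)).subtype)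
      refine ⟨h, ?_⟩
      rw [hfm1, ← LinearMap.comp_assoc, hh, LinearMap.comp_assoc, hsubnh]
      exact hh₀
    rcases i with n | n
    · match n with
      | 0 => exact fun g => ⟨fun hg => keyQ0 g hg, hrev g⟩
      | 1 => exact fun g => ⟨fun hg => keyQ1 g hg, hrev g⟩
      | (n+2) => exact fun g => ⟨fun hg => (hdual ((n+3 : ℕ) : ℤ) g).mp hg, hrev g⟩
    · match n with
      | 0 => exact fun g => ⟨fun hg => keyN0 g hg, hrev g⟩
      | 1 => exact fun g => ⟨fun hg => keyN1 g hg, hrev g⟩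
      | 2 => exact fun g => ⟨fun hg => keyN2 g hg, hrev g⟩
      | (n+3) => exact fun g => ⟨fun hg => (hdual (Int.negSucc (n+2)) g).mp hg, hrev g⟩
  · -- the cosyzygy is the kernel at spot 0
    have hle : LinearMap.range ι ≤ LinearMap.ker γ₀ := le_of_eq hkerγ₀.symm
    set γ : (F ⧸ LinearMap.range ι) →ₗ[S] (F × Q 1 : Type) :=
      (LinearMap.range ι).liftQ γ₀ hle with hγdef
    have hγinj : Function.Injective γ := by
      rw [← LinearMap.ker_eq_bot]
      exact Submodule.ker_liftQ_eq_bot _ _ _ (le_of_eq hkerγ₀)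
    have hγrange : LinearMap.range γ = LinearMap.ker δ := by
      rw [hγdef, Submodule.range_liftQ]
      exact hrangeγ₀
    exact ⟨(LinearEquiv.ofInjective γ hγinj).trans (LinearEquiv.ofEq _ _ hγrange)⟩

end CertAux2

section Cosyzygy
variable {S : Type} [Ring S]

set_option maxHeartbeats 2000000 in
theorem cosyzygy_step (k : Type) [Field k] [Algebra k S] [FiniteDimensional k S]
    (Q : ℤ → ModuleCat.{0} S) (e : ∀ i, Q i →ₗ[S] Q (i+1))
    (hproj : ∀ i, Module.Projective S (Q i))
    (hexact : ∀ i, LinearMap.range (e i) = LinearMap.ker (e (i+1)))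
    (hdual : ∀ (i : ℤ) (g : Q (i+1) →ₗ[S] S), g.comp (e i) = 0 ↔
      ∃ h : Q (i+1+1) →ₗ[S] S, h.comp (e (i+1)) = g)
    (hNfg : Module.Finite S ↥(LinearMap.ker (e 0))) :
    ∃ (m b : ℕ) (ι : ↥(LinearMap.ker (e 0)) →ₗ[S] ((Fin m → S) × (Fin b → S))),
      Function.Injective ι ∧
      IsGorensteinProj S ((((Fin m → S) × (Fin b → S)) : Type) ⧸ LinearMap.range ι) := by
  classical
  -- corestriction of e (-1)
  have hr1 : ∀ x : Q (-1), e (-1) x ∈ LinearMap.ker (e 0) := by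
    intro x
    show e (-1) x ∈ LinearMap.ker (e (-1 + 1))
    rw [← hexact (-1)]
    exact ⟨x, rfl⟩
  set nh : (Q (-1) : Type) →ₗ[S] ↥(LinearMap.ker (e 0)) :=
    (e (-1)).codRestrict (LinearMap.ker (e 0)) hr1 with hnh
  have hsubnh : (LinearMap.ker (e 0)).subtype.comp nh = e (-1) :=
    LinearMap.subtype_comp_codRestrict _ _ _
  have hnhsurj : Function.Surjective nh := by
    intro y
    have hy : (show (Q (-1+1) : Type) from (y : Q 0)) ∈ LinearMap.range (e (-1)) := by
      rw [hexact (-1)]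
      exact y.2
    obtain ⟨x, hx⟩ := hy
    exact ⟨x, Subtype.ext hx⟩
  -- step (a) : embed N into a finite free module
  obtain ⟨s0, hs0⟩ := Module.projective_def.mp (hproj 0)
  obtain ⟨a, v, hv⟩ := Module.Finite.exists_fin (R := S) (M := ↥(LinearMap.ker (e 0)))
  set T : Finset (Q 0) :=
    Finset.univ.biUnion (fun i : Fin a => (s0 ((v i : Q 0))).support) with hT
  set m := T.card with hm
  set eT := T.equivFin with heT
  set j₀ : ↥(LinearMap.ker (e 0)) →ₗ[S] (Fin m → S) :=
    LinearMap.pi (fun i => (Finsupp.lapply ((eT.symm i : Q 0))).comp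
      (s0.comp (LinearMap.ker (e 0)).subtype)) with hj₀
  have hj₀app : ∀ (x : ↥(LinearMap.ker (e 0))) (i : Fin m),
      j₀ x i = s0 ((x : Q 0)) ((eT.symm i : Q 0)) := fun x i => rfl
  have hsupp : ∀ x : ↥(LinearMap.ker (e 0)), ((s0 ((x : Q 0))).support : Set (Q 0)) ⊆ ↑T := by
    intro x
    have hx : x ∈ Submodule.span S (Set.range v) := by rw [hv]; trivial
    induction hx using Submodule.span_induction with
    | mem y hy =>
      obtain ⟨i, rfl⟩ := hy
      intro q hq
      exact Finset.mem_coe.mpr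
        (Finset.mem_biUnion.mpr ⟨i, Finset.mem_univ i, Finset.mem_coe.mp hq⟩)
    | zero =>
      intro q hq
      have h0 : s0 (((0 : ↥(LinearMap.ker (e 0))) : Q 0)) = 0 := by
        rw [show ((0 : ↥(LinearMap.ker (e 0))) : Q 0) = 0 from rfl, map_zero]
      rw [Finset.mem_coe, h0, Finsupp.support_zero] at hq
      exact absurd hq (Finset.notMem_empty q)
    | add y z _ _ hy hz =>
      intro q hq
      have hadd : ((y + z : ↥(LinearMap.ker (e 0))) : Q 0) = (y : Q 0) + (z : Q 0) := rfl
      have hq0 : q ∈ ((s0 ((y : Q 0)) + s0 ((z : Q 0))).support) := by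
        rw [Finset.mem_coe, hadd, map_add] at hq
        exact hq
      have hq' : q ∈ (s0 ((y : Q 0))).support ∪ (s0 ((z : Q 0))).support :=
        Finsupp.support_add hq0
      rcases Finset.mem_union.mp hq' with h | h
      · exact hy (Finset.mem_coe.mpr h)
      · exact hz (Finset.mem_coe.mpr h)
    | smul c y _ hy =>
      intro q hq
      have hsub : (s0 ((c • y : ↥(LinearMap.ker (e 0))) : Q 0)).support ⊆
          (s0 ((y : Q 0))).support := by
        have : ((c • y : ↥(LinearMap.ker (e 0))) : Q 0) = c • ((y : Q 0)) := rfl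
        rw [this, map_smul]
        exact Finsupp.support_smul
      exact hy (Finset.mem_coe.mpr (hsub (Finset.mem_coe.mp hq)))
  have hj₀inj : Function.Injective j₀ := by
    intro x y hxy
    have hz : j₀ (x - y) = 0 := by rw [map_sub, hxy, sub_self]
    have hs : s0 (((x - y : ↥(LinearMap.ker (e 0))) : Q 0)) = 0 := by
      ext q
      by_cases hq : q ∈ (s0 (((x - y : ↥(LinearMap.ker (e 0))) : Q 0))).support
      · have hqT : q ∈ T := by
          have := hsupp (x - y) (by simpa using hq)
          simpa using this
        have := congrFun hz (eT ⟨q, hqT⟩)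
        rw [hj₀app] at this
        simpa using this
      · simpa using Finsupp.notMem_support_iff.mp hq
    have : ((x - y : ↥(LinearMap.ker (e 0))) : Q 0) = 0 := by
      have h1 := hs0 (((x - y : ↥(LinearMap.ker (e 0))) : Q 0))
      rw [hs] at h1
      simpa using h1.symm
    have : x - y = 0 := Subtype.ext this
    rwa [sub_eq_zero] at this
  -- step (b) : finite generation of the S-dual of N over k
  haveI : FiniteDimensional k (↥(LinearMap.ker (e 0)) →ₗ[S] S) := by
    set Θ : (↥(LinearMap.ker (e 0)) →ₗ[S] S) →ₗ[k] (Fin a → S) :=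
      { toFun := fun f => fun i => f (v i)
        map_add' := fun f g => rfl
        map_smul' := fun c f => rfl } with hΘ
    have hΘinj : Function.Injective Θ := by
      intro f g hfg
      ext x
      have hx : x ∈ Submodule.span S (Set.range v) := by rw [hv]; trivial
      induction hx using Submodule.span_induction with
      | mem y hy =>
        obtain ⟨i, rfl⟩ := hy
        exact congrFun hfg i
      | zero => simp
      | add y z _ _ hy hz => rw [map_add, map_add, hy, hz]
      | smul c y _ hy => rw [map_smul, map_smul, hy]
    exact FiniteDimensional.of_injective Θ hΘinj
  obtain ⟨b, φ, hφ⟩ := Module.Finite.exists_fin (R := k)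
    (M := (↥(LinearMap.ker (e 0)) →ₗ[S] S))
  -- the embedding ι
  set ι : ↥(LinearMap.ker (e 0)) →ₗ[S] ((Fin m → S) × (Fin b → S)) :=
    j₀.prod (LinearMap.pi (fun i => φ i)) with hιdef
  have hιinj : Function.Injective ι := by
    intro x y hxy
    exact hj₀inj (congrArg Prod.fst hxy)
  have hext : ∀ ψ : ↥(LinearMap.ker (e 0)) →ₗ[S] S,
      ∃ h : ((Fin m → S) × (Fin b → S) : Type) →ₗ[S] S, h.comp ι = ψ := by
    intro ψ
    have hψ : ψ ∈ Submodule.span k (Set.range φ) := by rw [hφ]; trivial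
    obtain ⟨c, hc⟩ := (Submodule.mem_span_range_iff_exists_fun k).mp hψ
    refine ⟨∑ i : Fin b, c i • ((LinearMap.proj i).comp
      (LinearMap.snd S (Fin m → S) (Fin b → S))), ?_⟩
    apply LinearMap.ext; intro x
    show (∑ i : Fin b, c i • ((LinearMap.proj i).comp
      (LinearMap.snd S (Fin m → S) (Fin b → S)))) (ι x) = ψ x
    rw [← hc, LinearMap.sum_apply, LinearMap.sum_apply]
    exact Finset.sum_congr rfl (fun i _ => rfl)
  haveI : Module.Projective S ((Fin m → S) × (Fin b → S)) := inferInstance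
  -- step (d) : η
  have hNS : ∀ ψ : ↥(LinearMap.ker (e 0)) →ₗ[S] S,
      ∃ h : (Q 0 : Type) →ₗ[S] S, h.comp (LinearMap.ker (e 0)).subtype = ψ := by
    intro ψ
    have hcoc : (show (Q (-2+1) : Type) →ₗ[S] S from ψ.comp nh).comp (e (-2)) = 0 := by
      have hz : nh.comp (e (-2)) = 0 := by
        apply ext_of_comp_inj (Submodule.injective_subtype (LinearMap.ker (e 0)))
        rw [← LinearMap.comp_assoc, hsubnh, LinearMap.comp_zero]
        exact LinearMap.range_le_ker_iff.mp (le_of_eq (hexact (-2)))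
      rw [LinearMap.comp_assoc, hz, LinearMap.comp_zero]
    obtain ⟨h, hh⟩ := (hdual (-2) _).mp hcoc
    refine ⟨h, ext_of_comp_surj hnhsurj ?_⟩
    rw [LinearMap.comp_assoc, hsubnh]
    exact hh
  obtain ⟨η, hη⟩ := ext_along_homext k (LinearMap.ker (e 0)).subtype hNS
    ((Fin m → S) × (Fin b → S)) ι
  -- step (e) : φ0
  haveI := hproj 0
  obtain ⟨φ0, hφ0⟩ := ext_along_homext k ι hext (Q 0) (LinearMap.ker (e 0)).subtype
  -- step (f) : B
  have hyp0 : ∀ g : (Q 0 : Type) →ₗ[S] S, g.comp (LinearMap.ker (e 0)).subtype = 0 →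
      ∃ h : (Q 1 : Type) →ₗ[S] S, h.comp (e 0) = g := by
    intro g hg
    have hcoc : (show (Q (-1+1) : Type) →ₗ[S] S from g).comp (e (-1)) = 0 := by
      rw [show (e (-1) : (Q (-1) : Type) →ₗ[S] Q (-1+1)) =
        ((LinearMap.ker (e 0)).subtype.comp nh : (Q (-1) : Type) →ₗ[S] Q 0) from hsubnh.symm]
      rw [← LinearMap.comp_assoc, hg, LinearMap.zero_comp]
    obtain ⟨h, hh⟩ := (hdual (-1) _).mp hcoc
    exact ⟨h, hh⟩
  have hGι : (LinearMap.id - φ0.comp η).comp (LinearMap.ker (e 0)).subtype = 0 := by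
    rw [LinearMap.sub_comp, LinearMap.id_comp, LinearMap.comp_assoc, hη, hφ0, sub_self]
  obtain ⟨B, hB⟩ := hom_ext_proj k (LinearMap.ker (e 0)).subtype (e 0) hyp0 (Q 0)
    (LinearMap.id - φ0.comp η) hGι
  exact ⟨m, b, ι, hιinj,
    certAux Q e hproj hexact hdual ((Fin m → S) × (Fin b → S)) ι hιinj hext η hη φ0 hφ0 B hB⟩

end Cosyzygy

section KeyExt
variable {R : Type} [Ring R]

theorem keyext {A F C Y : Type} [AddCommGroup A] [Module R A] [AddCommGroup F] [Module R F]
    [AddCommGroup C] [Module R C] [AddCommGroup Y] [Module R Y]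
    (ι : A →ₗ[R] F) (hι : Function.Injective ι)
    (π : F →ₗ[R] C) (hπ : Function.Surjective π)
    (hker : LinearMap.ker π = LinearMap.range ι)
    (hEV : ExtVanishSucc R C Y 0)
    (ψ : A →ₗ[R] Y) : ∃ Ψ : F →ₗ[R] Y, Ψ.comp ι = ψ := by
  obtain ⟨P, dP, ε, hres⟩ := exists_projResolution (R := R) C
  haveI := hres.1 0
  obtain ⟨lam, hlam⟩ := Module.projective_lifting_property π ε.hom hπ
  have hmem : ∀ x, lam ((dP 0).hom x) ∈ LinearMap.range ι := by
    intro x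
    rw [← hker, LinearMap.mem_ker]
    rw [comp_apply_eq hlam ((dP 0).hom x)]
    exact comp_zero_apply (res_eps_comp_zero hres) x
  obtain ⟨ν, hν⟩ := factorThru ι hι (lam.comp (dP 0).hom) hmem
  have hcoc : (ψ.comp ν).comp (dP 1).hom = 0 := by
    have h1 : ν.comp (dP 1).hom = 0 := by
      apply ext_of_comp_inj hι
      rw [← LinearMap.comp_assoc, hν, LinearMap.comp_assoc, res_comp_zero hres 0,
        LinearMap.comp_zero, LinearMap.comp_zero]
    rw [LinearMap.comp_assoc, h1, LinearMap.comp_zero]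
  obtain ⟨h, hh⟩ := hEV P dP ε hres (ψ.comp ν) hcoc
  set τ : (P 0 × A : Type) →ₗ[R] F := lam.coprod ι with hτ
  have hτapp : ∀ (p : P 0) (a : A), τ (p, a) = lam p + ι a := fun p a => rfl
  have hτsurj : Function.Surjective τ := by
    intro f
    obtain ⟨p, hp⟩ := hres.2.1 (π f)
    have hker' : f - lam p ∈ LinearMap.ker π := by
      rw [LinearMap.mem_ker, map_sub, comp_apply_eq hlam p, sub_eq_zero]
      exact hp.symm
    rw [hker] at hker'
    obtain ⟨a, ha⟩ := hker'
    exact ⟨(p, a), by rw [hτapp, ha]; abel⟩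
  set Θ : (P 0 × A : Type) →ₗ[R] Y := h.coprod ψ with hΘ
  have hΘapp : ∀ (p : P 0) (a : A), Θ (p, a) = h p + ψ a := fun p a => rfl
  have hkill : LinearMap.ker τ ≤ LinearMap.ker Θ := by
    rintro ⟨p, a⟩ hpa
    rw [LinearMap.mem_ker, hτapp] at hpa
    have hεp : p ∈ LinearMap.ker ε.hom := by
      rw [LinearMap.mem_ker]
      have h1 : π (lam p) = ε p := comp_apply_eq hlam p
      have h2 : π (ι a) = 0 := by
        have : ι a ∈ LinearMap.ker π := by rw [hker]; exact ⟨a, rfl⟩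
        simpa using this
      have h3 : π (lam p + ι a) = 0 := by rw [hpa, map_zero]
      rw [map_add, h1, h2, add_zero] at h3
      exact h3
    rw [← hres.2.2.1] at hεp
    obtain ⟨q, hq⟩ := hεp
    have hν' : ι (ν q) = lam p := by
      rw [comp_apply_eq hν q, ← hq]
      rfl
    have hνa : ν q = -a := by
      apply hι
      rw [hν', map_neg]
      rw [eq_neg_iff_add_eq_zero]
      exact hpa
    rw [LinearMap.mem_ker, hΘapp, ← hq, comp_apply_eq hh q]
    show ψ (ν q) + ψ a = 0
    rw [hνa, map_neg, neg_add_cancel]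
  set τbar := (LinearMap.ker τ).liftQ τ (le_refl _) with hτbar
  have hτbar_inj : Function.Injective τbar := by
    rw [← LinearMap.ker_eq_bot]
    exact Submodule.ker_liftQ_eq_bot _ _ _ (le_refl _)
  have hτbar_surj : Function.Surjective τbar := by
    intro f
    obtain ⟨x, hx⟩ := hτsurj f
    exact ⟨Submodule.Quotient.mk x, hx⟩
  set eqv := LinearEquiv.ofBijective τbar ⟨hτbar_inj, hτbar_surj⟩ with heqv
  refine ⟨((LinearMap.ker τ).liftQ Θ hkill).comp eqv.symm.toLinearMap, ?_⟩
  apply LinearMap.ext; intro a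
  show ((LinearMap.ker τ).liftQ Θ hkill) (eqv.symm (ι a)) = ψ a
  have h1 : eqv.symm (ι a) = Submodule.Quotient.mk ((0 : P 0), a) := by
    rw [LinearEquiv.symm_apply_eq]
    show ι a = τ ((0 : P 0), a)
    rw [hτapp, map_zero, zero_add]
  rw [h1]
  show Θ ((0 : P 0), a) = ψ a
  rw [hΘapp, map_zero, zero_add]

end KeyExt

section LiftLemma
variable {S : Type} [Ring S]

theorem lift_lemma (k : Type) [Field k] [Algebra k S] [FiniteDimensional k S] (t : ℤ) (L : ℤ → ModuleCat.{0} S) (d : ∀ i, L i →ₗ[S] L (i + 1))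
    (hcomplex : ∀ i, (d (i + 1)).comp (d i) = 0)
    (hbddt : ∀ i, t < i → Subsingleton (L i))
    (hperp : ∀ i, MemGprojPerp S (L i))
    (hH : ∀ i : ℤ, i + 1 ≠ 0 → LinearMap.range (d i) = LinearMap.ker (d (i + 1))) :
    ∀ (n : ℕ) (j : ℤ), 0 ≤ j → t - j ≤ n →
    ∀ (N : Type) [AddCommGroup N] [Module S N], Module.Finite S N → IsGorensteinProj S N →
    ∀ φ : N →ₗ[S] L (j+1), (d (j+1)).comp φ = 0 →
    ∃ ψ : N →ₗ[S] L j, (d j).comp ψ = φ := by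
  intro n
  induction n with
  | zero =>
    intro j hj0 hjt N _ _ _ _ φ hφ
    haveI : Subsingleton (L (j+1)) := hbddt (j+1) (by omega)
    exact ⟨0, by apply LinearMap.ext; intro x; exact Subsingleton.elim _ _⟩
  | succ n IH =>
    intro j hj0 hjt N instN1 instN2 hNfg hNGP φ hφ
    by_cases hts : t ≤ j
    · haveI : Subsingleton (L (j+1)) := hbddt (j+1) (by omega)
      exact ⟨0, by apply LinearMap.ext; intro x; exact Subsingleton.elim _ _⟩
    obtain ⟨Q, e, hproj, hexact, hdual, ⟨u⟩⟩ := hNGP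
    haveI hKfg : Module.Finite S ↥(LinearMap.ker (e 0).hom) := Module.Finite.equiv u
    obtain ⟨m, b, ι, hιinj, hGP'⟩ := cosyzygy_step k Q (fun i => (e i).hom) hproj hexact hdual hKfg
    set F : Type := (Fin m → S) × (Fin b → S) with hF
    set C' : Type := F ⧸ LinearMap.range ι with hC'
    haveI hC'fg : Module.Finite S C' :=
      Module.Finite.of_surjective (LinearMap.range ι).mkQ (Submodule.mkQ_surjective _)
    have hEV : ExtVanishSucc S C' (L (j+1)) 0 := hperp (j+1) C' hC'fg hGP' 0
    set φK : ↥(LinearMap.ker (e 0).hom) →ₗ[S] L (j+1) := φ.comp u.symm.toLinearMap with hφK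
    have hφKz : (d (j+1)).comp φK = 0 := by
      rw [hφK, ← LinearMap.comp_assoc, hφ, LinearMap.zero_comp]
    obtain ⟨Φ, hΦ⟩ := keyext ι hιinj (LinearMap.range ι).mkQ (Submodule.mkQ_surjective _)
      (Submodule.ker_mkQ _) hEV φK
    have hkill : LinearMap.range ι ≤ LinearMap.ker ((d (j+1)).comp Φ) := by
      rintro x ⟨y, rfl⟩
      rw [LinearMap.mem_ker]
      show (d (j+1)) (Φ (ι y)) = 0
      rw [comp_apply_eq hΦ y]
      exact comp_zero_apply hφKz y
    set ρ : C' →ₗ[S] L (j+1+1) := (LinearMap.range ι).liftQ ((d (j+1)).comp Φ) hkill with hρ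
    have hρmk : ρ.comp (LinearMap.range ι).mkQ = (d (j+1)).comp Φ := by
      apply LinearMap.ext; intro x; rfl
    have hρz : (d (j+1+1)).comp ρ = 0 := by
      apply ext_of_comp_surj (Submodule.mkQ_surjective (LinearMap.range ι))
      rw [LinearMap.comp_assoc, hρmk, ← LinearMap.comp_assoc, hcomplex (j+1),
        LinearMap.zero_comp, LinearMap.zero_comp]
    obtain ⟨σ, hσ⟩ := IH (j+1) (by omega) (by omega) C' hC'fg hGP' ρ hρz
    set Φ' : F →ₗ[S] L (j+1) := Φ - σ.comp (LinearMap.range ι).mkQ with hΦ'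
    have hΦ'ι : Φ'.comp ι = φK := by
      rw [hΦ', LinearMap.sub_comp, hΦ, LinearMap.comp_assoc]
      have hz : (LinearMap.range ι).mkQ.comp ι = 0 := by
        apply LinearMap.ext; intro y
        show (LinearMap.range ι).mkQ (ι y) = 0
        rw [Submodule.mkQ_apply, Submodule.Quotient.mk_eq_zero]
        exact ⟨y, rfl⟩
      rw [hz, LinearMap.comp_zero, sub_zero]
    have hdΦ' : (d (j+1)).comp Φ' = 0 := by
      rw [hΦ', LinearMap.comp_sub, ← LinearMap.comp_assoc, hσ, hρmk, sub_self]
    have hmemZ : ∀ x : F, Φ' x ∈ LinearMap.ker (d (j+1)) := by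
      intro x
      rw [LinearMap.mem_ker]
      exact comp_zero_apply hdΦ' x
    set Φ'' : F →ₗ[S] ↥(LinearMap.ker (d (j+1))) :=
      Φ'.codRestrict (LinearMap.ker (d (j+1))) hmemZ with hΦ''
    have hmemd : ∀ x : L j, (d j) x ∈ LinearMap.ker (d (j+1)) := by
      intro x
      rw [LinearMap.mem_ker]
      exact comp_zero_apply (hcomplex j) x
    set πZ : (L j : Type) →ₗ[S] ↥(LinearMap.ker (d (j+1))) :=
      (d j).codRestrict (LinearMap.ker (d (j+1))) hmemd with hπZ
    have hπZsurj : Function.Surjective πZ := by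
      intro y
      have hy : (y : L (j+1)) ∈ LinearMap.range (d j) := by
        rw [hH j (by omega)]
        exact y.2
      obtain ⟨x, hx⟩ := hy
      exact ⟨x, Subtype.ext hx⟩
    haveI : Module.Projective S F := inferInstanceAs
      (Module.Projective S ((Fin m → S) × (Fin b → S)))
    obtain ⟨Λ, hΛ⟩ := Module.projective_lifting_property πZ Φ'' hπZsurj
    refine ⟨(Λ.comp ι).comp u.toLinearMap, ?_⟩
    apply LinearMap.ext; intro x
    show (d j) (Λ (ι (u x))) = φ x
    have h1 : (d j) (Λ (ι (u x))) = ((πZ (Λ (ι (u x)))) : L (j+1)) := rfl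
    rw [h1, comp_apply_eq hΛ (ι (u x))]
    show Φ' (ι (u x)) = φ x
    rw [comp_apply_eq hΦ'ι (u x)]
    show φ (u.symm (u x)) = φ x
    rw [LinearEquiv.symm_apply_apply]

end LiftLemma

theorem range_subsingleton' {R M N : Type} [Ring R] [AddCommGroup M] [Module R M]
    [AddCommGroup N] [Module R N] (f : M →ₗ[R] N) [Subsingleton M] :
    Subsingleton ↥(LinearMap.range f) := by
  constructor
  rintro ⟨a, x, hx⟩ ⟨b, y, hy⟩
  apply Subtype.ext
  show a = b
  rw [← hx, ← hy, Subsingleton.elim x y]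

set_option maxHeartbeats 1000000 in
theorem statement13_aux (k : Type) [Field k] (S : Type) [Ring S] [Algebra k S]
    [FiniteDimensional k S]
    (s t : ℤ) (L : ℤ → ModuleCat.{0} S) (d : ∀ i, L i →ₗ[S] L (i + 1))
    (hcomplex : ∀ i, (d (i + 1)).comp (d i) = 0)
    (hbdd : ∀ i, (i < s ∨ t < i) → Subsingleton (L i))
    (hfg : ∀ i, Module.Finite S (L i))
    (hperp : ∀ i, MemGprojPerp S (L i))
    (M : Type) [AddCommGroup M] [Module S M] (hMfg : Module.Finite S M)
    (hH : ∀ i : ℤ, i + 1 ≠ 0 → LinearMap.range (d i) = LinearMap.ker (d (i + 1)))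
    (hH0 : Nonempty (M ≃ₗ[S] (↥(LinearMap.ker (d 0)) ⧸
      Submodule.comap (LinearMap.ker (d 0)).subtype (LinearMap.range (d (-1)))))) :
    MemGprojPerp S M := by
  intro U instU1 instU2 hUfg hUGP i P dP ε hres
  -- `AllSpots` for each `L m`
  have hAL : ∀ m : ℤ, AllSpots P dP (L m) := fun m n g hg =>
    hperp m U hUfg hUGP n P dP ε hres g hg
  -- left tail: ranges
  have hB : ∀ (n : ℕ) (iz : ℤ), iz + 1 ≤ 0 → iz ≤ s - 1 + n →
      AllSpots P dP ↥(LinearMap.range (d iz)) := by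
    intro n
    induction n with
    | zero =>
      intro iz _ hiz
      haveI : Subsingleton (L iz) := hbdd iz (Or.inl (by omega))
      haveI := range_subsingleton' (d iz)
      exact allSpots_of_subsingleton
    | succ n IH =>
      intro iz hiz1 hiz2
      by_cases hc : iz ≤ s - 1 + n
      · exact IH iz hiz1 hc
      · obtain ⟨iz', rfl⟩ : ∃ iz', iz = iz' + 1 := ⟨iz - 1, by omega⟩
        refine allSpots_quot hres (LinearMap.range (d iz')).subtype
          (Submodule.injective_subtype _) (d (iz'+1)).rangeRestrict
          (LinearMap.surjective_rangeRestrict _) ?_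
          (IH iz' (by omega) (by omega)) (hAL (iz'+1))
        rw [LinearMap.ker_rangeRestrict, ← hH iz' (by omega), Submodule.range_subtype]
  -- right tail: kernels
  have hZ : ∀ (n : ℕ) (j : ℤ), 0 ≤ j → t - j ≤ n →
      AllSpots P dP ↥(LinearMap.ker (d j)) := by
    intro n
    induction n with
    | zero =>
      intro j hj0 hjt
      haveI : Subsingleton (L (j+1)) := hbdd (j+1) (Or.inr (by omega))
      have hker_top : LinearMap.ker (d j) = ⊤ := by
        apply eq_top_iff.mpr
        intro x _
        exact Subsingleton.elim _ _
      exact allSpots_congr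
        (Submodule.topEquiv.symm.trans (LinearEquiv.ofEq ⊤ (LinearMap.ker (d j)) hker_top.symm))
        (hAL j)
    | succ n IH =>
      intro j hj0 hjt
      by_cases hc : t - j ≤ n
      · exact IH j hj0 hc
      have hmemd : ∀ x : L j, (d j) x ∈ LinearMap.ker (d (j+1)) := by
        intro x
        rw [LinearMap.mem_ker]
        exact comp_zero_apply (hcomplex j) x
      have hπsurj : Function.Surjective ((d j).codRestrict (LinearMap.ker (d (j+1))) hmemd) := by
        intro y
        have hy : (y : L (j+1)) ∈ LinearMap.range (d j) := by
          rw [hH j (by omega)]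
          exact y.2
        obtain ⟨x, hx⟩ := hy
        exact ⟨x, Subtype.ext hx⟩
      refine allSpots_ker hres (LinearMap.ker (d j)).subtype (Submodule.injective_subtype _)
        ((d j).codRestrict (LinearMap.ker (d (j+1))) hmemd) hπsurj ?_ (hAL j)
        (IH (j+1) (by omega) (by omega)) ?_
      · rw [LinearMap.ker_codRestrict, Submodule.range_subtype]
      · -- lifting maps from U into ker (d (j+1))
        intro φ
        have hφ' : (d (j+1)).comp ((LinearMap.ker (d (j+1))).subtype.comp φ) = 0 := by
          apply LinearMap.ext; intro x
          exact (φ x).2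
        obtain ⟨ψ, hψ⟩ := lift_lemma k t L d hcomplex (fun m hm => hbdd m (Or.inr hm)) hperp hH
          ((t - j).toNat) j hj0 (by omega) U hUfg hUGP
          ((LinearMap.ker (d (j+1))).subtype.comp φ) hφ'
        refine ⟨ψ, ?_⟩
        apply LinearMap.ext; intro x
        apply Subtype.ext
        show (d j) (ψ x) = ((φ x : L (j+1)))
        exact comp_apply_eq hψ x
  -- assemble
  have hB0 : AllSpots P dP ↥(LinearMap.range (d (-1))) :=
    hB ((-s).toNat) (-1) (by omega) (by omega)
  have hZ0 : AllSpots P dP ↥(LinearMap.ker (d 0)) := hZ (t.toNat + 1) 0 (by omega) (by omega)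
  have hle : LinearMap.range (d (-1)) ≤ LinearMap.ker (d 0) :=
    LinearMap.range_le_ker_iff.mpr (hcomplex (-1))
  have hAB' : AllSpots P dP
      ↥(Submodule.comap (LinearMap.ker (d 0)).subtype (LinearMap.range (d (-1)))) :=
    allSpots_congr (Submodule.comapSubtypeEquivOfLe hle).symm hB0
  have hAq : AllSpots P dP ((↥(LinearMap.ker (d 0))) ⧸
      Submodule.comap (LinearMap.ker (d 0)).subtype (LinearMap.range (d (-1)))) := by
    set W := Submodule.comap (LinearMap.ker (d 0)).subtype (LinearMap.range (d (-1))) with hW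
    refine allSpots_quot hres W.subtype W.injective_subtype W.mkQ W.mkQ_surjective ?_ hAB' hZ0
    rw [Submodule.ker_mkQ, Submodule.range_subtype]
  have hAM : AllSpots P dP M := allSpots_congr hH0.some.symm hAq
  exact fun g hg => hAM i g hg

/-- Let `L⬝ : 0 → L^s → ⋯ → L^t → 0` be a bounded complex of finitely
generated modules all lying in `Gproj(S)^⊥`.  If a finitely generated module `M` is
quasi-isomorphic to `L⬝` (i.e. the homology of `L⬝` is concentrated in degree `0` and
isomorphic to `M`), then `M ∈ Gproj(S)^⊥`. -/
theorem statement13 (k : Type) [Field k] (S : Type) [Ring S] [Algebra k S]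
    [FiniteDimensional k S]
    (s t : ℤ) (L : ℤ → ModuleCat.{0} S) (d : ∀ i, L i ⟶ L (i + 1))
    (hcomplex : ∀ i, (d (i + 1)).hom.comp (d i).hom = 0)
    (hbdd : ∀ i, (i < s ∨ t < i) → Subsingleton (L i))
    (hfg : ∀ i, Module.Finite S (L i))
    (hperp : ∀ i, MemGprojPerp S (L i))
    (M : Type) [AddCommGroup M] [Module S M] (hMfg : Module.Finite S M)
    (hH : ∀ i : ℤ, i + 1 ≠ 0 → LinearMap.range (d i).hom = LinearMap.ker (d (i + 1)).hom)
    (hH0 : Nonempty (M ≃ₗ[S] (↥(LinearMap.ker (d 0).hom) ⧸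
      Submodule.comap (LinearMap.ker (d 0).hom).subtype (LinearMap.range (d (-1)).hom)))) :
    MemGprojPerp S M := by
  exact statement13_aux k S s t L (fun i => (d i).hom) hcomplex hbdd hfg hperp M hMfg hH hH0
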